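/- Let A be a P₀-algebra with a descending filtration A = F⁰A ⊇ F¹A ⊇ F²A ⊇ ⋯ by ideals such that FᵖA·FᵠA ⊆ F^{p+q}A, where FᵖA is the ideal generated by homogeneous elements of degree ≥ p. Suppose the bracket satisfies: for homogeneous elements a of degree d and b of degree ≥ p, [a,b] has degree d + (deg b) + 1. Then for all p ≥ 0: (i) if d ≥ -1 then [A^d, FᵖA] ⊆ FᵖA; (ii) if d < -1 and p + d ≥ 0 then [A^d, FᵖA] ⊆ F^{p+d+1}A. -/

import Mathlib

/-- A `P₀`-algebra over a field `k`: a ℤ-graded (graded-commutative) algebra with a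
Poisson bracket of degree `1` satisfying graded antisymmetry, Leibniz rule and
graded Jacobi identity. -/
structure P0Data (k A : Type*) [Field k] [Ring A] [Algebra k A] where
  grade : ℤ → Submodule k A
  internal : DirectSum.IsInternal grade
  one_mem : (1 : A) ∈ grade 0
  mul_mem : ∀ {r s : ℤ} {a b : A}, a ∈ grade r → b ∈ grade s → a * b ∈ grade (r + s)
  gcomm : ∀ {r s : ℤ} {a b : A}, a ∈ grade r → b ∈ grade s →
    a * b = ((-1 : k) ^ (r * s)) • (b * a)
  bracket : A →ₗ[k] A →ₗ[k] A
  bracket_mem : ∀ {r s : ℤ} {a b : A}, a ∈ grade r → b ∈ grade s →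
    bracket a b ∈ grade (r + s + 1)
  antisymm : ∀ {r s : ℤ} {a b : A}, a ∈ grade r → b ∈ grade s →
    bracket a b = -(((-1 : k) ^ ((r - 1) * (s - 1))) • bracket b a)
  leibniz : ∀ {r s : ℤ} {a b : A} (c : A), a ∈ grade r → b ∈ grade s →
    bracket (a * b) c = a * bracket b c + ((-1 : k) ^ (r * s)) • (b * bracket a c)
  jacobi : ∀ {r s t : ℤ} {a b c : A}, a ∈ grade r → b ∈ grade s → c ∈ grade t →
    ((-1 : k) ^ ((r - 1) * (t - 1))) • bracket (bracket a b) c +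
      ((-1 : k) ^ ((s - 1) * (r - 1))) • bracket (bracket b c) a +
      ((-1 : k) ^ ((t - 1) * (s - 1))) • bracket (bracket c a) b = 0

/-- The ideal `FᵖA` generated by homogeneous elements of degree at least `p`. -/
def P0Data.filt {k A : Type*} [Field k] [Ring A] [Algebra k A] (P : P0Data k A) (p : ℤ) :
    Submodule k A :=
  Submodule.span k {x | ∃ (a b : A) (q : ℤ), p ≤ q ∧ b ∈ P.grade q ∧ x = a * b}

/-- The powers `I⁽ʲ⁾` of the ideal `I = F¹A` generated by elements of positive degree:
`I⁽⁰⁾ = A`, `I⁽ʲ⁺¹⁾ = I · I⁽ʲ⁾`. -/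
def P0Data.ipow {k A : Type*} [Field k] [Ring A] [Algebra k A] (P : P0Data k A) :
    ℕ → Submodule k A
  | 0 => ⊤
  | j + 1 => Submodule.span k {x | ∃ a ∈ P.filt 1, ∃ b ∈ P.ipow j, x = a * b}

section Aux
variable {k A : Type*} [Field k] [Ring A] [Algebra k A]

lemma P0Data.mul_mem_filt (P : P0Data k A) {q : ℤ} (p : ℤ) (hp : p ≤ q)
    (a : A) {b : A} (hb : b ∈ P.grade q) : a * b ∈ P.filt p :=
  Submodule.subset_span ⟨a, b, q, hp, hb, rfl⟩

/-- Key computation: bracket of a homogeneous element with a filtration element. -/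
lemma P0Data.bracket_mem_filt (P : P0Data k A) {p t d : ℤ} (ht1 : t ≤ p)
    (ht2 : t ≤ p + d + 1) {a : A} (ha : a ∈ P.grade d) {b : A} (hb : b ∈ P.filt p) :
    P.bracket a b ∈ P.filt t := by
  induction hb using Submodule.span_induction with
  | mem x hx =>
    obtain ⟨c, e, q, hpq, he, rfl⟩ := hx
    -- decompose `c` into homogeneous components
    have hc : c ∈ ⨆ r, P.grade r := by
      rw [P.internal.submodule_iSup_eq_top]; trivial
    refine Submodule.iSup_induction (motive := fun c => P.bracket a (c * e) ∈ P.filt t)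
      P.grade hc (fun r c hc => ?_) (by simp) (fun c c' ihc ihc' => ?_)
    · show P.bracket a (c * e) ∈ P.filt t
      rw [P.antisymm ha (P.mul_mem hc he), P.leibniz a hc he]
      refine Submodule.neg_mem _ (Submodule.smul_mem _ _ (Submodule.add_mem _ ?_ ?_))
      · exact P.mul_mem_filt t (by omega) c (P.bracket_mem he ha)
      · refine Submodule.smul_mem _ _ ?_
        rw [P.gcomm he (P.bracket_mem hc ha)]
        exact Submodule.smul_mem _ _ (P.mul_mem_filt t (by omega) _ he)
    · show P.bracket a ((c + c') * e) ∈ P.filt t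
      rw [add_mul, map_add]
      exact Submodule.add_mem _ ihc ihc'
  | zero => simp
  | add x y _ _ ihx ihy => rw [map_add]; exact Submodule.add_mem _ ihx ihy
  | smul s x _ ihx => rw [map_smul]; exact Submodule.smul_mem _ _ ihx

end Aux

/-- Lemma l-Maud. For `p ≥ 0`:
(i) if `d ≥ -1` then `[A^d, FᵖA] ⊆ FᵖA`;
(ii) if `d < -1` and `p + d ≥ 0` then `[A^d, FᵖA] ⊆ F^{p+d+1}A`. -/
theorem bracket_filtration_compat {k A : Type*} [Field k] [CharZero k]
    [Ring A] [Algebra k A] (P : P0Data k A)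
    (hmul : ∀ (p q : ℤ) (x y : A), x ∈ P.filt p → y ∈ P.filt q → x * y ∈ P.filt (p + q)) :
    ∀ p : ℤ, 0 ≤ p →
      (∀ d : ℤ, -1 ≤ d → ∀ a ∈ P.grade d, ∀ b ∈ P.filt p,
        P.bracket a b ∈ P.filt p) ∧
      (∀ d : ℤ, d < -1 → 0 ≤ p + d → ∀ a ∈ P.grade d, ∀ b ∈ P.filt p,
        P.bracket a b ∈ P.filt (p + d + 1)) := by
  intro p _
  constructor
  · intro d hd a ha b hb
    exact P.bracket_mem_filt le_rfl (by omega) ha hb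
  · intro d hd _ a ha b hb
    exact P.bracket_mem_filt (by omega) (by omega) ha hb
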